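/- (Bound on the one-step gain update of IPO.) Suppose K* ∈ ℝ^{k×n} is stable and satisfies K* = γ(R + γBᵀP_{K*}B)⁻¹BᵀP_{K*}A (equivalently E_{K*} = 0). Let K ∈ ℝ^{k×n} be stable and define K' := K − (R + γBᵀP_K B)⁻¹E_K. Then ‖K' − K*‖ ≤ ( 1 + ‖γBᵀP_{K*}B + R‖/σ_min(R) )·‖K − K*‖ + (γ/σ_min(R))·( ‖B‖‖A‖ + ‖B‖²‖K‖ )·‖P_K − P_{K*}‖. -/

import Mathlib

open Matrix


noncomputable def spec {m l : ℕ} (M : Matrix (Fin m) (Fin l) ℝ) : ℝ :=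
  ‖LinearMap.toContinuousLinearMap (Matrix.toEuclideanLin M)‖

noncomputable def sigMin {m l : ℕ} (M : Matrix (Fin m) (Fin l) ℝ) : ℝ :=
  sInf {r : ℝ | ∃ x : EuclideanSpace ℝ (Fin l), ‖x‖ = 1 ∧
    r = ‖LinearMap.toContinuousLinearMap (Matrix.toEuclideanLin M) x‖}

noncomputable def frob {m l : ℕ} (M : Matrix (Fin m) (Fin l) ℝ) : ℝ :=
  Real.sqrt (Matrix.trace (Mᵀ * M))

def loewner {m : ℕ} (X Y : Matrix (Fin m) (Fin m) ℝ) : Prop :=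
  (Y - X).PosSemidef

noncomputable def Pmat {n k : ℕ} (γ : ℝ) (A : Matrix (Fin n) (Fin n) ℝ)
    (B : Matrix (Fin n) (Fin k) ℝ) (Q : Matrix (Fin n) (Fin n) ℝ)
    (R : Matrix (Fin k) (Fin k) ℝ) (K : Matrix (Fin k) (Fin n) ℝ) :
    Matrix (Fin n) (Fin n) ℝ :=
  ∑' t : ℕ, γ ^ t • (((A - B * K)ᵀ) ^ t * (Q + Kᵀ * R * K) * (A - B * K) ^ t)

noncomputable def Emat {n k : ℕ} (γ : ℝ) (A : Matrix (Fin n) (Fin n) ℝ)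
    (B : Matrix (Fin n) (Fin k) ℝ) (Q : Matrix (Fin n) (Fin n) ℝ)
    (R : Matrix (Fin k) (Fin k) ℝ) (K : Matrix (Fin k) (Fin n) ℝ) :
    Matrix (Fin k) (Fin n) ℝ :=
  -(γ • (Bᵀ * Pmat γ A B Q R K * (A - B * K))) + R * K

noncomputable def Smat {n k : ℕ} (γ : ℝ) (A : Matrix (Fin n) (Fin n) ℝ)
    (B : Matrix (Fin n) (Fin k) ℝ) (W : Matrix (Fin n) (Fin n) ℝ)
    (D₀ : Matrix (Fin n) (Fin n) ℝ) (K : Matrix (Fin k) (Fin n) ℝ)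
    (Sg : Matrix (Fin k) (Fin k) ℝ) : Matrix (Fin n) (Fin n) ℝ :=
  ∑' t : ℕ, γ ^ t •
    ((A - B * K) ^ t * D₀ * ((A - B * K)ᵀ) ^ t +
      ∑ s ∈ Finset.Icc 1 t,
        (A - B * K) ^ (t - s) * (B * Sg * Bᵀ + W) * ((A - B * K)ᵀ) ^ (t - s))

noncomputable def Cost {n k : ℕ} (γ τ : ℝ) (A : Matrix (Fin n) (Fin n) ℝ)
    (B : Matrix (Fin n) (Fin k) ℝ) (Q : Matrix (Fin n) (Fin n) ℝ)
    (R : Matrix (Fin k) (Fin k) ℝ) (W : Matrix (Fin n) (Fin n) ℝ)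
    (D₀ : Matrix (Fin n) (Fin n) ℝ) (K : Matrix (Fin k) (Fin n) ℝ)
    (Sg : Matrix (Fin k) (Fin k) ℝ) : ℝ :=
  Matrix.trace (D₀ * Pmat γ A B Q R K) +
    (1 / (1 - γ)) *
      (Matrix.trace (Sg * (R + γ • (Bᵀ * Pmat γ A B Q R K * B))) -
        (τ / 2) * ((k : ℝ) + Real.log ((2 * Real.pi) ^ k * Sg.det)) +
        γ * Matrix.trace (W * Pmat γ A B Q R K))

noncomputable def fent {n k : ℕ} (γ τ : ℝ) (A : Matrix (Fin n) (Fin n) ℝ)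
    (B : Matrix (Fin n) (Fin k) ℝ) (Q : Matrix (Fin n) (Fin n) ℝ)
    (R : Matrix (Fin k) (Fin k) ℝ) (K : Matrix (Fin k) (Fin n) ℝ)
    (Sg : Matrix (Fin k) (Fin k) ℝ) : ℝ :=
  (τ / (2 * (1 - γ))) * Real.log Sg.det -
    (1 / (1 - γ)) * Matrix.trace (Sg * (R + γ • (Bᵀ * Pmat γ A B Q R K * B)))


section AuxIPO

open scoped RealInnerProductSpace InnerProductSpace

noncomputable def clm {m l : ℕ} (M : Matrix (Fin m) (Fin l) ℝ) :
    EuclideanSpace ℝ (Fin l) →L[ℝ] EuclideanSpace ℝ (Fin m) :=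
  LinearMap.toContinuousLinearMap (Matrix.toEuclideanLin M)

lemma spec_eq' {m l : ℕ} (M : Matrix (Fin m) (Fin l) ℝ) : spec M = ‖clm M‖ := rfl

lemma sigMin_eq {m l : ℕ} (M : Matrix (Fin m) (Fin l) ℝ) :
    sigMin M = sInf {r : ℝ | ∃ x : EuclideanSpace ℝ (Fin l), ‖x‖ = 1 ∧ r = ‖clm M x‖} := rfl

lemma clm_apply {m l : ℕ} (M : Matrix (Fin m) (Fin l) ℝ) (x : EuclideanSpace ℝ (Fin l)) :
    clm M x = (WithLp.equiv 2 (Fin m → ℝ)).symm (M *ᵥ (WithLp.equiv 2 (Fin l → ℝ)) x) := by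
  simp [clm, Matrix.toEuclideanLin_apply]

lemma clm_apply' {m l : ℕ} (M : Matrix (Fin m) (Fin l) ℝ) (x : EuclideanSpace ℝ (Fin l))
    (i : Fin m) : clm M x i = (M *ᵥ (WithLp.equiv 2 (Fin l → ℝ)) x) i := by
  rw [clm_apply]; rfl

lemma clm_mul {m l p : ℕ} (M : Matrix (Fin m) (Fin l) ℝ) (N : Matrix (Fin l) (Fin p) ℝ) :
    clm (M * N) = (clm M).comp (clm N) := by
  ext x i
  simp [clm_apply, mulVec_mulVec]

lemma clm_add {m l : ℕ} (M N : Matrix (Fin m) (Fin l) ℝ) : clm (M + N) = clm M + clm N := by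
  simp [clm, map_add]

lemma clm_sub {m l : ℕ} (M N : Matrix (Fin m) (Fin l) ℝ) : clm (M - N) = clm M - clm N := by
  simp [clm, map_sub]

lemma clm_smul {m l : ℕ} (c : ℝ) (M : Matrix (Fin m) (Fin l) ℝ) : clm (c • M) = c • clm M := by
  simp [clm, _root_.map_smul]

lemma clm_one {m : ℕ} : clm (1 : Matrix (Fin m) (Fin m) ℝ) = ContinuousLinearMap.id ℝ _ := by
  ext x i
  simp [clm_apply]

lemma clm_transpose {m l : ℕ} (M : Matrix (Fin m) (Fin l) ℝ) :
    clm Mᵀ = ContinuousLinearMap.adjoint (clm M) := by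
  rw [clm, clm, ← Matrix.conjTranspose_eq_transpose_of_trivial,
    Matrix.toEuclideanLin_conjTranspose_eq_adjoint, LinearMap.adjoint_toContinuousLinearMap]

lemma spec_transpose {m l : ℕ} (M : Matrix (Fin m) (Fin l) ℝ) : spec Mᵀ = spec M := by
  rw [spec_eq', spec_eq', clm_transpose]
  exact ContinuousLinearMap.adjoint.norm_map _

lemma spec_nonneg {m l : ℕ} (M : Matrix (Fin m) (Fin l) ℝ) : 0 ≤ spec M := norm_nonneg _

lemma spec_mul_le {m l p : ℕ} (M : Matrix (Fin m) (Fin l) ℝ) (N : Matrix (Fin l) (Fin p) ℝ) :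
    spec (M * N) ≤ spec M * spec N := by
  rw [spec_eq', spec_eq', spec_eq', clm_mul]
  exact ContinuousLinearMap.opNorm_comp_le _ _

lemma spec_add_le {m l : ℕ} (M N : Matrix (Fin m) (Fin l) ℝ) :
    spec (M + N) ≤ spec M + spec N := by
  rw [spec_eq', spec_eq', spec_eq', clm_add]; exact norm_add_le _ _

lemma spec_sub_le {m l : ℕ} (M N : Matrix (Fin m) (Fin l) ℝ) :
    spec (M - N) ≤ spec M + spec N := by
  rw [spec_eq', spec_eq', spec_eq', clm_sub]; exact norm_sub_le _ _

lemma spec_smul {m l : ℕ} (c : ℝ) (M : Matrix (Fin m) (Fin l) ℝ) :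
    spec (c • M) = |c| * spec M := by
  rw [spec_eq', spec_eq', clm_smul]
  rw [norm_smul c (clm M), Real.norm_eq_abs]

lemma spec_one_le {m : ℕ} : spec (1 : Matrix (Fin m) (Fin m) ℝ) ≤ 1 := by
  rw [spec_eq', clm_one]; exact ContinuousLinearMap.norm_id_le

lemma spec_pow_le {m : ℕ} (M : Matrix (Fin m) (Fin m) ℝ) (t : ℕ) :
    spec (M ^ t) ≤ spec M ^ t := by
  induction t with
  | zero => simpa using spec_one_le
  | succ t ih =>
      rw [pow_succ, pow_succ]
      exact le_trans (spec_mul_le _ _) (mul_le_mul_of_nonneg_right ih (spec_nonneg M))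

lemma abs_entry_le_spec {m l : ℕ} (M : Matrix (Fin m) (Fin l) ℝ) (i : Fin m) (j : Fin l) :
    |M i j| ≤ spec M := by
  have h1 : |M i j| ≤ ‖clm M (EuclideanSpace.single j (1:ℝ))‖ := by
    have h2 : clm M (EuclideanSpace.single j (1:ℝ)) i = M i j := by
      rw [clm_apply', WithLp.equiv_apply, EuclideanSpace.ofLp_single, mulVec_single]
      simp
    have h3 := abs_real_inner_le_norm
      (EuclideanSpace.single i (1:ℝ)) (clm M (EuclideanSpace.single j (1:ℝ)))
    rw [EuclideanSpace.inner_single_left] at h3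
    simpa [h2, EuclideanSpace.norm_single] using h3
  calc |M i j| ≤ ‖clm M (EuclideanSpace.single j (1:ℝ))‖ := h1
    _ ≤ ‖clm M‖ * ‖EuclideanSpace.single j (1:ℝ)‖ := ContinuousLinearMap.le_opNorm _ _
    _ = spec M := by rw [EuclideanSpace.norm_single]; simp [spec_eq']

lemma posSemidef_smul {n : ℕ} {c : ℝ} (hc : 0 ≤ c) {M : Matrix (Fin n) (Fin n) ℝ}
    (hM : M.PosSemidef) : (c • M).PosSemidef := by
  refine Matrix.PosSemidef.of_dotProduct_mulVec_nonneg ?_ fun x => ?_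
  · simp [Matrix.IsHermitian, conjTranspose_smul,
      ← Matrix.conjTranspose_eq_transpose_of_trivial, hM.1.eq]
  · rw [smul_mulVec, dotProduct_smul, smul_eq_mul]
    exact mul_nonneg hc (hM.dotProduct_mulVec_nonneg x)

lemma gspec_lt_one {n : ℕ} {γ : ℝ} (hγ0 : 0 < γ) {X : Matrix (Fin n) (Fin n) ℝ}
    (hX : spec X < 1 / Real.sqrt γ) : γ * spec X ^ 2 < 1 := by
  have hs : 0 < Real.sqrt γ := Real.sqrt_pos.2 hγ0
  have h2 : spec X ^ 2 < (1 / Real.sqrt γ) ^ 2 :=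
    pow_lt_pow_left₀ hX (spec_nonneg X) (by norm_num)
  have h3 : (1 / Real.sqrt γ) ^ 2 = 1 / γ := by
    rw [div_pow, one_pow, Real.sq_sqrt hγ0.le]
  rw [h3] at h2
  have h4 := mul_lt_mul_of_pos_left h2 hγ0
  rwa [mul_one_div_cancel hγ0.ne'] at h4

lemma abs_term_entry_le {n : ℕ} {γ : ℝ} (hγ0 : 0 < γ) (X C : Matrix (Fin n) (Fin n) ℝ)
    (t : ℕ) (i j : Fin n) :
    |(γ ^ t • ((Xᵀ) ^ t * C * X ^ t)) i j| ≤ spec C * (γ * spec X ^ 2) ^ t := by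
  have hXt : spec ((Xᵀ) ^ t) ≤ spec X ^ t := by
    rw [← transpose_pow, spec_transpose]; exact spec_pow_le X t
  have h1 : |((Xᵀ) ^ t * C * X ^ t) i j| ≤ spec X ^ t * spec C * spec X ^ t := by
    refine (abs_entry_le_spec _ i j).trans ?_
    calc spec ((Xᵀ) ^ t * C * X ^ t) ≤ spec ((Xᵀ) ^ t * C) * spec (X ^ t) := spec_mul_le _ _
      _ ≤ spec ((Xᵀ) ^ t) * spec C * spec (X ^ t) :=
          mul_le_mul_of_nonneg_right (spec_mul_le _ _) (spec_nonneg _)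
      _ ≤ spec X ^ t * spec C * spec (X ^ t) :=
          mul_le_mul_of_nonneg_right
            (mul_le_mul_of_nonneg_right hXt (spec_nonneg C)) (spec_nonneg _)
      _ ≤ spec X ^ t * spec C * spec X ^ t :=
          mul_le_mul_of_nonneg_left (spec_pow_le X t)
            (mul_nonneg (pow_nonneg (spec_nonneg X) t) (spec_nonneg C))
  have hsm : (γ ^ t • ((Xᵀ) ^ t * C * X ^ t)) i j = γ ^ t * ((Xᵀ) ^ t * C * X ^ t) i j := rfl
  rw [hsm, abs_mul, abs_pow, abs_of_pos hγ0]
  calc γ ^ t * |((Xᵀ) ^ t * C * X ^ t) i j| ≤ γ ^ t * (spec X ^ t * spec C * spec X ^ t) := by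
        exact mul_le_mul_of_nonneg_left h1 (pow_nonneg hγ0.le t)
    _ = spec C * (γ * spec X ^ 2) ^ t := by
        rw [mul_pow]; ring

lemma summable_series {n : ℕ} {γ : ℝ} (hγ0 : 0 < γ) (X C : Matrix (Fin n) (Fin n) ℝ)
    (hX : γ * spec X ^ 2 < 1) :
    Summable (fun t : ℕ => γ ^ t • ((Xᵀ) ^ t * C * X ^ t)) := by
  refine Pi.summable.mpr ?_
  intro i
  rw [Pi.summable]
  intro j
  apply Summable.of_abs
  have hr0 : 0 ≤ γ * spec X ^ 2 := by positivity
  exact Summable.of_nonneg_of_le (fun t => abs_nonneg _)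
    (fun t => abs_term_entry_le hγ0 X C t i j)
    ((summable_geometric_of_lt_one hr0 hX).mul_left (spec C))

lemma posSemidef_tsum {n : ℕ} {f : ℕ → Matrix (Fin n) (Fin n) ℝ} (hsum : Summable f)
    (hf : ∀ t, (f t).PosSemidef) : (∑' t, f t).PosSemidef := by
  refine Matrix.PosSemidef.of_dotProduct_mulVec_nonneg ?_ fun x => ?_
  · show (∑' t, f t)ᴴ = _
    rw [Matrix.conjTranspose_tsum]
    exact tsum_congr fun t => (hf t).1.eq
  · let g : Matrix (Fin n) (Fin n) ℝ →+ ℝ :=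
      { toFun := fun M => star x ⬝ᵥ M *ᵥ x
        map_zero' := by simp
        map_add' := fun M N => by
          show star x ⬝ᵥ (M + N) *ᵥ x = star x ⬝ᵥ M *ᵥ x + star x ⬝ᵥ N *ᵥ x
          rw [add_mulVec, dotProduct_add] }
    have hg : Continuous g := by
      exact continuous_const.dotProduct (continuous_id.matrix_mulVec continuous_const)
    have h1 : g (∑' t, f t) = ∑' t, g (f t) := (hsum.hasSum.map g hg).tsum_eq.symm
    show 0 ≤ g (∑' t, f t)
    rw [h1]
    exact tsum_nonneg fun t => (hf t).dotProduct_mulVec_nonneg x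

lemma pmat_posSemidef {n k : ℕ} {γ : ℝ} (hγ0 : 0 < γ) (A : Matrix (Fin n) (Fin n) ℝ)
    (B : Matrix (Fin n) (Fin k) ℝ) (Q : Matrix (Fin n) (Fin n) ℝ)
    (R : Matrix (Fin k) (Fin k) ℝ) (K : Matrix (Fin k) (Fin n) ℝ)
    (hQ : Q.PosSemidef) (hR : R.PosDef)
    (hss : γ * spec (A - B * K) ^ 2 < 1) : (Pmat γ A B Q R K).PosSemidef := by
  have hC : (Q + Kᵀ * R * K).PosSemidef := by
    refine hQ.add ?_
    have := hR.posSemidef.conjTranspose_mul_mul_same K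
    rwa [Matrix.conjTranspose_eq_transpose_of_trivial] at this
  refine posSemidef_tsum (summable_series hγ0 _ _ hss) fun t => ?_
  refine posSemidef_smul (pow_nonneg hγ0.le t) ?_
  have := hC.conjTranspose_mul_mul_same ((A - B * K) ^ t)
  rwa [Matrix.conjTranspose_eq_transpose_of_trivial, transpose_pow] at this

lemma inner_clm {k : ℕ} (M : Matrix (Fin k) (Fin k) ℝ) (x y : EuclideanSpace ℝ (Fin k)) :
    ⟪x, clm M y⟫_ℝ = star (x : Fin k → ℝ) ⬝ᵥ (M *ᵥ (WithLp.equiv 2 (Fin k → ℝ)) y) := by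
  simp only [PiLp.inner_apply, RCLike.inner_apply, starRingEnd_apply, clm_apply']
  simp [dotProduct, mul_comm]

lemma eig_min {k : ℕ} (hk : 0 < k) {R : Matrix (Fin k) (Fin k) ℝ} (hR : R.PosDef) :
    ∃ lam : ℝ, 0 < lam ∧ sigMin R ≤ lam ∧
      ∀ x : EuclideanSpace ℝ (Fin k), lam * ‖x‖ ^ 2 ≤ ⟪x, clm R x⟫_ℝ := by
  have hH := hR.1
  set b := hH.eigenvectorBasis with hb
  set ev := hH.eigenvalues with hev
  have hne : (Finset.univ : Finset (Fin k)).Nonempty := ⟨⟨0, hk⟩, Finset.mem_univ _⟩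
  obtain ⟨i0, -, hmin⟩ := Finset.exists_min_image Finset.univ ev hne
  have hlam : 0 < ev i0 := hR.eigenvalues_pos i0
  have hRb : ∀ i, clm R (b i) = ev i • b i := by
    intro i
    have h := hH.mulVec_eigenvectorBasis i
    ext j
    rw [clm_apply']
    have : (R *ᵥ ⇑(b i)) j = (ev i • ⇑(b i)) j := by rw [h]
    simpa using this
  have hadj : ∀ (i) (x : EuclideanSpace ℝ (Fin k)),
      ⟪b i, clm R x⟫_ℝ = ev i * ⟪b i, x⟫_ℝ := by
    intro i x
    have hRsymm : Rᵀ = R := by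
      rw [← Matrix.conjTranspose_eq_transpose_of_trivial, hR.1.eq]
    have h1 : ContinuousLinearMap.adjoint (clm R) = clm R := by
      rw [← clm_transpose, hRsymm]
    rw [← ContinuousLinearMap.adjoint_inner_left, h1, hRb i, real_inner_smul_left]
  refine ⟨ev i0, hlam, ?_, ?_⟩
  · rw [sigMin_eq]
    have hmem : ev i0 ∈ {r : ℝ | ∃ x : EuclideanSpace ℝ (Fin k), ‖x‖ = 1 ∧ r = ‖clm R x‖} := by
      refine ⟨b i0, b.orthonormal.1 i0, ?_⟩
      rw [hRb i0, norm_smul, Real.norm_eq_abs, abs_of_pos hlam]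
      simp [b.orthonormal.1 i0]
    refine csInf_le ⟨0, ?_⟩ hmem
    rintro r ⟨x, -, rfl⟩
    exact norm_nonneg _
  · intro x
    have hx2 : (‖x‖ : ℝ) ^ 2 = ∑ i, ⟪x, b i⟫_ℝ * ⟪b i, x⟫_ℝ := by
      rw [b.sum_inner_mul_inner x x, real_inner_self_eq_norm_sq]
    have hq : ⟪x, clm R x⟫_ℝ = ∑ i, ev i * (⟪x, b i⟫_ℝ * ⟪b i, x⟫_ℝ) := by
      rw [← b.sum_inner_mul_inner x (clm R x)]
      refine Finset.sum_congr rfl fun i _ => ?_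
      rw [hadj i x]; ring
    rw [hq, hx2, Finset.mul_sum]
    refine Finset.sum_le_sum fun i _ => ?_
    have hsq : 0 ≤ ⟪x, b i⟫_ℝ * ⟪b i, x⟫_ℝ := by
      rw [real_inner_comm x (b i)]; exact mul_self_nonneg _
    exact mul_le_mul_of_nonneg_right (hmin i (Finset.mem_univ i)) hsq

lemma quadform_nonneg {k : ℕ} {S : Matrix (Fin k) (Fin k) ℝ} (hS : S.PosSemidef)
    (v : EuclideanSpace ℝ (Fin k)) : 0 ≤ ⟪v, clm S v⟫_ℝ := by
  rw [inner_clm]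
  exact hS.dotProduct_mulVec_nonneg _

lemma norm_clm_ge {k : ℕ} (hk : 0 < k) {R S : Matrix (Fin k) (Fin k) ℝ} (hR : R.PosDef)
    (hS : S.PosSemidef) (v : EuclideanSpace ℝ (Fin k)) :
    sigMin R * ‖v‖ ≤ ‖clm (R + S) v‖ := by
  obtain ⟨lam, hlam, hsig, hquad⟩ := eig_min hk hR
  have h1 : ⟪v, clm (R + S) v⟫_ℝ = ⟪v, clm R v⟫_ℝ + ⟪v, clm S v⟫_ℝ := by
    rw [clm_add]
    simp [inner_add_right]
  have h2 : sigMin R * ‖v‖ ^ 2 ≤ ⟪v, clm (R + S) v⟫_ℝ := by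
    have := hquad v
    have h3 := quadform_nonneg hS v
    have h4 : sigMin R * ‖v‖ ^ 2 ≤ lam * ‖v‖ ^ 2 :=
      mul_le_mul_of_nonneg_right hsig (sq_nonneg _)
    linarith
  have h5 : ⟪v, clm (R + S) v⟫_ℝ ≤ ‖v‖ * ‖clm (R + S) v‖ := real_inner_le_norm _ _
  rcases eq_or_ne v 0 with rfl | hv
  · simp
  · have hvn : 0 < ‖v‖ := norm_pos_iff.2 hv
    nlinarith

lemma sigMin_pos {k : ℕ} (hk : 0 < k) {R : Matrix (Fin k) (Fin k) ℝ} (hR : R.PosDef) :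
    0 < sigMin R := by
  obtain ⟨lam, hlam, hsig, hquad⟩ := eig_min hk hR
  have hle : lam ≤ sigMin R := by
    rw [sigMin_eq]
    refine le_csInf ⟨‖clm R (EuclideanSpace.single ⟨0, hk⟩ (1:ℝ))‖,
      EuclideanSpace.single ⟨0, hk⟩ (1:ℝ), by simp [EuclideanSpace.norm_single], rfl⟩ ?_
    rintro r ⟨x, hx, rfl⟩
    have h1 := hquad x
    have h2 : ⟪x, clm R x⟫_ℝ ≤ ‖x‖ * ‖clm R x‖ := real_inner_le_norm _ _
    rw [hx] at h1 h2
    simpa using h1.trans h2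
  linarith

lemma spec_inv_le {k : ℕ} (hk : 0 < k) {R S : Matrix (Fin k) (Fin k) ℝ} (hR : R.PosDef)
    (hS : S.PosSemidef) : spec (R + S)⁻¹ ≤ 1 / sigMin R := by
  have hσ := sigMin_pos hk hR
  have hM : (R + S).PosDef := hR.add_posSemidef hS
  have hdet : IsUnit (R + S).det := hM.det_pos.ne'.isUnit
  rw [spec_eq']
  refine ContinuousLinearMap.opNorm_le_bound _ (by positivity) fun y => ?_
  have h1 : sigMin R * ‖clm (R + S)⁻¹ y‖ ≤ ‖clm (R + S) (clm (R + S)⁻¹ y)‖ :=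
    norm_clm_ge hk hR hS _
  have h2 : clm (R + S) (clm (R + S)⁻¹ y) = y := by
    rw [← ContinuousLinearMap.comp_apply, ← clm_mul, Matrix.mul_nonsing_inv _ hdet, clm_one]
    rfl
  rw [h2] at h1
  rw [div_mul_eq_mul_div, le_div_iff₀ hσ, mul_comm]
  linarith

lemma emat_identity {n k : ℕ} (γ : ℝ) (A : Matrix (Fin n) (Fin n) ℝ)
    (B : Matrix (Fin n) (Fin k) ℝ) (R : Matrix (Fin k) (Fin k) ℝ)
    (K Kstar : Matrix (Fin k) (Fin n) ℝ) (P Ps : Matrix (Fin n) (Fin n) ℝ)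
    (hMsK : (R + γ • (Bᵀ * Ps * B)) * Kstar = γ • (Bᵀ * Ps * A)) :
    -(γ • (Bᵀ * P * (A - B * K))) + R * K
      = (R + γ • (Bᵀ * Ps * B)) * (K - Kstar) - γ • (Bᵀ * (P - Ps) * (A - B * K)) := by
  rw [show (R + γ • (Bᵀ * Ps * B)) * (K - Kstar)
      = (R + γ • (Bᵀ * Ps * B)) * K - γ • (Bᵀ * Ps * A) by rw [Matrix.mul_sub, hMsK]]
  simp only [sub_eq_add_neg, Matrix.add_mul, Matrix.mul_add, Matrix.mul_neg, Matrix.neg_mul,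
    smul_add, smul_neg, Matrix.smul_mul, Matrix.mul_smul, Matrix.mul_assoc, neg_add, neg_neg]
  abel

end AuxIPO

/-- Bound on the one-step gain update of IPO. -/
theorem stmt14 (n k : ℕ) (hn : 0 < n) (hk : 0 < k)
    (γ : ℝ) (hγ0 : 0 < γ) (hγ1 : γ < 1)
    (A : Matrix (Fin n) (Fin n) ℝ) (B : Matrix (Fin n) (Fin k) ℝ)
    (Q : Matrix (Fin n) (Fin n) ℝ) (hQ : Q.PosSemidef)
    (R : Matrix (Fin k) (Fin k) ℝ) (hR : R.PosDef)
    (Kstar : Matrix (Fin k) (Fin n) ℝ)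
    (hKstar : spec (A - B * Kstar) < 1 / Real.sqrt γ)
    (hfix : Kstar =
      γ • ((R + γ • (Bᵀ * Pmat γ A B Q R Kstar * B))⁻¹ * (Bᵀ * Pmat γ A B Q R Kstar * A)))
    (K : Matrix (Fin k) (Fin n) ℝ) (hK : spec (A - B * K) < 1 / Real.sqrt γ)
    (K' : Matrix (Fin k) (Fin n) ℝ)
    (hK'def : K' = K - (R + γ • (Bᵀ * Pmat γ A B Q R K * B))⁻¹ * Emat γ A B Q R K) :
    spec (K' - Kstar) ≤
      (1 + spec (γ • (Bᵀ * Pmat γ A B Q R Kstar * B) + R) / sigMin R) * spec (K - Kstar) +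
      (γ / sigMin R) * (spec B * spec A + spec B ^ 2 * spec K) *
        spec (Pmat γ A B Q R K - Pmat γ A B Q R Kstar) := by
  set P := Pmat γ A B Q R K with hPdef
  set Ps := Pmat γ A B Q R Kstar with hPsdef
  have hgs : γ * spec (A - B * K) ^ 2 < 1 := gspec_lt_one hγ0 hK
  have hgss : γ * spec (A - B * Kstar) ^ 2 < 1 := gspec_lt_one hγ0 hKstar
  have hPsd : P.PosSemidef := by rw [hPdef]; exact pmat_posSemidef hγ0 A B Q R K hQ hR hgs
  have hPssd : (Ps).PosSemidef :=
    pmat_posSemidef hγ0 A B Q R Kstar hQ hR hgss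
  have hSsd : (γ • (Bᵀ * P * B)).PosSemidef := by
    refine posSemidef_smul hγ0.le ?_
    have := hPsd.conjTranspose_mul_mul_same B
    rwa [Matrix.conjTranspose_eq_transpose_of_trivial] at this
  have hSssd : (γ • (Bᵀ * Ps * B)).PosSemidef := by
    refine posSemidef_smul hγ0.le ?_
    have := hPssd.conjTranspose_mul_mul_same B
    rwa [Matrix.conjTranspose_eq_transpose_of_trivial] at this
  have hMsdet : IsUnit (R + γ • (Bᵀ * Ps * B)).det :=
    (hR.add_posSemidef hSssd).det_pos.ne'.isUnit
  have hσ : 0 < sigMin R := sigMin_pos hk hR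
  have hMinv : spec (R + γ • (Bᵀ * P * B))⁻¹ ≤ 1 / sigMin R :=
    spec_inv_le hk hR hSsd
  -- fixed point equation
  have hMsK : (R + γ • (Bᵀ * Ps * B)) * Kstar
      = γ • (Bᵀ * Ps * A) := by
    conv_lhs => rw [hfix]
    rw [Matrix.mul_smul, ← Matrix.mul_assoc, Matrix.mul_nonsing_inv _ hMsdet, Matrix.one_mul]
  -- key identity for Emat
  have hE : Emat γ A B Q R K
      = (R + γ • (Bᵀ * Ps * B)) * (K - Kstar)
        - γ • (Bᵀ * (P - Ps) * (A - B * K)) := by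
    rw [Emat]
    exact emat_identity γ A B R K Kstar _ _ hMsK
  -- decomposition of K' - Kstar
  have hKK : K' - Kstar
      = (K - Kstar)
        - (R + γ • (Bᵀ * P * B))⁻¹
            * ((R + γ • (Bᵀ * Ps * B)) * (K - Kstar))
        + γ • ((R + γ • (Bᵀ * P * B))⁻¹
            * (Bᵀ * (P - Ps) * (A - B * K))) := by
    rw [hK'def, hE, Matrix.mul_sub, Matrix.mul_smul]
    abel
  set d := spec (K - Kstar) with hd
  set p := spec (P - Ps) with hp
  set Mi := (R + γ • (Bᵀ * P * B))⁻¹ with hMi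
  set Ms := R + γ • (Bᵀ * Ps * B) with hMs
  have hd0 : 0 ≤ d := spec_nonneg _
  have hp0 : 0 ≤ p := spec_nonneg _
  have hB0 : 0 ≤ spec B := spec_nonneg _
  have hA0 : 0 ≤ spec A := spec_nonneg _
  have hK0 : 0 ≤ spec K := spec_nonneg _
  have hMs0 : 0 ≤ spec Ms := spec_nonneg _
  have hMi0 : 0 ≤ spec Mi := spec_nonneg _
  -- bound on X = A - B*K
  have hXb : spec (A - B * K) ≤ spec A + spec B * spec K :=
    (spec_sub_le A (B * K)).trans (add_le_add_right (spec_mul_le B K) _)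
  have hX0 : 0 ≤ spec (A - B * K) := spec_nonneg _
  -- first term bound
  have hT1 : spec ((K - Kstar) - Mi * (Ms * (K - Kstar)))
      ≤ d + (1 / sigMin R) * (spec Ms * d) := by
    refine (spec_sub_le _ _).trans (add_le_add_right ?_ d)
    calc spec (Mi * (Ms * (K - Kstar))) ≤ spec Mi * spec (Ms * (K - Kstar)) := spec_mul_le _ _
      _ ≤ spec Mi * (spec Ms * d) :=
          mul_le_mul_of_nonneg_left (spec_mul_le _ _) hMi0
      _ ≤ (1 / sigMin R) * (spec Ms * d) :=
          mul_le_mul_of_nonneg_right hMinv (mul_nonneg hMs0 hd0)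
  -- second term bound
  have hT2 : spec (γ • (Mi * (Bᵀ * (P - Ps) * (A - B * K))))
      ≤ γ * ((1 / sigMin R) * (spec B * p * (spec A + spec B * spec K))) := by
    rw [spec_smul, abs_of_pos hγ0]
    refine mul_le_mul_of_nonneg_left ?_ hγ0.le
    calc spec (Mi * (Bᵀ * (P - Ps) * (A - B * K)))
        ≤ spec Mi * spec (Bᵀ * (P - Ps) * (A - B * K)) :=
          spec_mul_le _ _
      _ ≤ spec Mi * (spec B * p * (spec A + spec B * spec K)) := by
          refine mul_le_mul_of_nonneg_left ?_ hMi0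
          calc spec (Bᵀ * (P - Ps) * (A - B * K))
              ≤ spec (Bᵀ * (P - Ps)) * spec (A - B * K) :=
                spec_mul_le _ _
            _ ≤ spec Bᵀ * p * spec (A - B * K) :=
                mul_le_mul_of_nonneg_right (spec_mul_le _ _) hX0
            _ = spec B * p * spec (A - B * K) := by rw [spec_transpose]
            _ ≤ spec B * p * (spec A + spec B * spec K) :=
                mul_le_mul_of_nonneg_left hXb (mul_nonneg hB0 hp0)
      _ ≤ (1 / sigMin R) * (spec B * p * (spec A + spec B * spec K)) :=
          mul_le_mul_of_nonneg_right hMinv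
            (mul_nonneg (mul_nonneg hB0 hp0) (by positivity))
  have hfinal : spec (K' - Kstar)
      ≤ (d + (1 / sigMin R) * (spec Ms * d))
        + γ * ((1 / sigMin R) * (spec B * p * (spec A + spec B * spec K))) := by
    rw [hKK]
    exact (spec_add_le _ _).trans (add_le_add hT1 hT2)
  have hMsrw : spec (γ • (Bᵀ * Ps * B) + R) = spec Ms := by
    rw [hMs, add_comm]
  rw [hMsrw]
  calc spec (K' - Kstar)
      ≤ (d + (1 / sigMin R) * (spec Ms * d))
        + γ * ((1 / sigMin R) * (spec B * p * (spec A + spec B * spec K))) := hfinal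
    _ = (1 + spec Ms / sigMin R) * d
        + γ / sigMin R * (spec B * spec A + spec B ^ 2 * spec K) * p := by
        field_simp
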